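/- For a bounded random variable X, α ∈ (0,1), and any probability density f ≥ 0 with E[f] = 1 and relative entropy E[f log f] ≤ -log α, one has E[-fX] ≤ EVaR_α(X). (One direction of the dual/robust representation, following from the Donsker–Varadhan variational inequality E[f·(-sX)] ≤ log E[exp(-sX)] + E[f log f].) -/

import Mathlib

open MeasureTheory Real

noncomputable def EVaR {Ω : Type*} [MeasurableSpace Ω] (μ : Measure Ω) (X : Ω → ℝ)
    (α : ℝ) : ℝ :=
  sInf ((fun s : ℝ => (Real.log (∫ ω, Real.exp (-s * X ω) ∂μ) - Real.log α) / s) '' Set.Ioi 0)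

lemma young_entropy (a b : ℝ) (ha : 0 ≤ a) :
    a * b ≤ a * Real.log a - a + Real.exp b := by
  rcases eq_or_lt_of_le ha with h | h
  · simp [← h]; positivity
  · have h1 : (b - Real.log a) + 1 ≤ Real.exp (b - Real.log a) := Real.add_one_le_exp _
    have h2 := mul_le_mul_of_nonneg_left h1 ha
    rw [Real.exp_sub, Real.exp_log h] at h2
    have : a * (Real.exp b / a) = Real.exp b := by field_simp
    nlinarith [Real.exp_pos b]

theorem evar_dual_upper_bound {Ω : Type*} [MeasurableSpace Ω] (μ : Measure Ω)
    [IsProbabilityMeasure μ] (X : Ω → ℝ) (hX : Measurable X)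
    (C : ℝ) (hXb : ∀ ω, |X ω| ≤ C)
    (f : Ω → ℝ) (hf : Measurable f) (hf0 : ∀ ω, 0 ≤ f ω)
    (hf1 : Integrable f μ) (hfmean : ∫ ω, f ω ∂μ = 1)
    (hent_int : Integrable (fun ω => f ω * Real.log (f ω)) μ)
    (α : ℝ) (hα : α ∈ Set.Ioo (0 : ℝ) 1)
    (hent : ∫ ω, f ω * Real.log (f ω) ∂μ ≤ -Real.log α) :
    (∫ ω, -(f ω * X ω) ∂μ) ≤ EVaR μ X α := by
  unfold EVaR
  refine le_csInf ⟨_, ⟨1, Set.mem_Ioi.2 one_pos, rfl⟩⟩ ?_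
  rintro b ⟨s, hs, rfl⟩
  simp only [Set.mem_Ioi] at hs
  set Z := ∫ ω, Real.exp (-s * X ω) ∂μ with hZdef
  have hexpInt : Integrable (fun ω => Real.exp (-s * X ω)) μ := by
    apply (integrable_const (Real.exp (s * C))).mono'
      ((hX.const_mul (-s)).exp).aestronglyMeasurable
    filter_upwards with ω
    rw [Real.norm_eq_abs, abs_of_pos (Real.exp_pos _)]
    have := (abs_le.1 (hXb ω)).1
    exact Real.exp_le_exp.2 (by nlinarith)
  have hZpos : 0 < Z := by
    have hle : Real.exp (-(s * C)) ≤ Z := by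
      calc Real.exp (-(s * C)) = ∫ _ω, Real.exp (-(s * C)) ∂μ := by simp
      _ ≤ Z := by
          apply integral_mono (integrable_const _) hexpInt
          intro ω
          have := (abs_le.1 (hXb ω)).2
          exact Real.exp_le_exp.2 (by nlinarith)
    linarith [Real.exp_pos (-(s * C))]
  have hfX : Integrable (fun ω => f ω * X ω) μ := by
    apply (hf1.const_mul C).mono' ((hf.mul hX).aestronglyMeasurable)
    filter_upwards with ω
    rw [Pi.mul_apply, norm_mul, Real.norm_eq_abs, Real.norm_eq_abs, abs_of_nonneg (hf0 ω)]
    have := hXb ω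
    nlinarith [hf0 ω, abs_nonneg (X ω)]
  have key : ∀ ω, f ω * (-s * X ω - Real.log Z) ≤
      f ω * Real.log (f ω) - f ω + Real.exp (-s * X ω - Real.log Z) :=
    fun ω => young_entropy _ _ (hf0 ω)
  have hLHSint : Integrable (fun ω => f ω * (-s * X ω - Real.log Z)) μ := by
    have heq : (fun ω => f ω * (-s * X ω - Real.log Z)) =
        fun ω => (-s) * (f ω * X ω) - Real.log Z * f ω := by ext ω; ring
    rw [heq]
    exact (hfX.const_mul _).sub (hf1.const_mul _)
  have hexp2 : Integrable (fun ω => Real.exp (-s * X ω - Real.log Z)) μ := by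
    simp_rw [Real.exp_sub]
    exact hexpInt.div_const _
  have hsub : Integrable (fun ω => f ω * Real.log (f ω) - f ω) μ := hent_int.sub hf1
  have hRHSint : Integrable
      (fun ω => f ω * Real.log (f ω) - f ω + Real.exp (-s * X ω - Real.log Z)) μ :=
    hsub.add hexp2
  have hint := integral_mono hLHSint hRHSint key
  have e1 : ∫ ω, f ω * (-s * X ω - Real.log Z) ∂μ =
      (-s) * (∫ ω, f ω * X ω ∂μ) - Real.log Z := by
    have heq : (fun ω => f ω * (-s * X ω - Real.log Z)) =
        fun ω => (-s) * (f ω * X ω) - Real.log Z * f ω := by ext ω; ring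
    rw [heq, integral_sub (hfX.const_mul _) (hf1.const_mul _),
      integral_const_mul, integral_const_mul, hfmean, mul_one]
  have eexp : ∫ ω, Real.exp (-s * X ω - Real.log Z) ∂μ = 1 := by
    simp_rw [Real.exp_sub, Real.exp_log hZpos]
    rw [integral_div, ← hZdef, div_self hZpos.ne']
  have e2 : ∫ ω, (f ω * Real.log (f ω) - f ω + Real.exp (-s * X ω - Real.log Z)) ∂μ =
      ∫ ω, f ω * Real.log (f ω) ∂μ := by
    rw [integral_add hsub hexp2, integral_sub hent_int hf1, hfmean, eexp]
    ring
  rw [e1, e2] at hint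
  have eneg : ∫ ω, -(f ω * X ω) ∂μ = -(∫ ω, f ω * X ω ∂μ) := integral_neg _
  rw [eneg, le_div_iff₀ hs]
  nlinarith [hint, hent]
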